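/- Let a₁, ..., a_k be {0,1}-valued random variables such that for every subset S ⊆ [k], E[∏_{i∈S} a_i] ≤ p^{|S|} for some p ∈ [0,1]. Let b₁, ..., b_k be i.i.d. Bernoulli(p) random variables. Then for every positive integer ℓ, E[(a₁ + ... + a_k)^ℓ] ≤ E[(b₁ + ... + b_k)^ℓ]. -/

import Mathlib

open MeasureTheory ProbabilityTheory

lemma expand01 {k ℓ : ℕ} (x : Fin k → ℝ) (hx : ∀ i, x i = 0 ∨ x i = 1) :
    (∑ i, x i) ^ ℓ
      = ∑ g ∈ Fintype.piFinset (fun _ : Fin ℓ => (Finset.univ : Finset (Fin k))),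
          ∏ i ∈ Finset.image g Finset.univ, x i := by
  rw [Finset.sum_pow']
  refine Finset.sum_congr rfl fun g _ => ?_
  rw [Finset.prod_comp]
  refine Finset.prod_congr rfl fun i hi => ?_
  have hpos : 0 < (Finset.filter (fun j => g j = i) Finset.univ).card := by
    rcases Finset.mem_image.mp hi with ⟨j, _, hj⟩
    exact Finset.card_pos.mpr ⟨j, by simp [hj]⟩
  rcases hx i with h | h
  · rw [h, zero_pow hpos.ne']
  · rw [h, one_pow]

/-- Moment domination: if {0,1}-valued variables a₁,...,a_k satisfy
E[∏_{i∈S} aᵢ] ≤ p^{|S|} for every S ⊆ [k], and b₁,...,b_k are i.i.d.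
Bernoulli(p), then E[(∑ aᵢ)^ℓ] ≤ E[(∑ bᵢ)^ℓ]. -/
theorem stmt9 {Ω Ω' : Type*} [MeasureSpace Ω] [MeasureSpace Ω']
    [IsProbabilityMeasure (ℙ : Measure Ω)] [IsProbabilityMeasure (ℙ : Measure Ω')]
    (k : ℕ) (p : ℝ) (hp0 : 0 ≤ p) (hp1 : p ≤ 1)
    (a : Fin k → Ω → ℝ) (hameas : ∀ i, Measurable (a i))
    (ha01 : ∀ i ω, a i ω = 0 ∨ a i ω = 1)
    (hmom : ∀ S : Finset (Fin k), ∫ ω, ∏ i ∈ S, a i ω ∂ℙ ≤ p ^ S.card)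
    (b : Fin k → Ω' → ℝ) (hbmeas : ∀ i, Measurable (b i))
    (hbindep : iIndepFun b ℙ)
    (hblaw : ∀ i, Measure.map (b i) ℙ
      = ENNReal.ofReal (1 - p) • Measure.dirac (0 : ℝ)
        + ENNReal.ofReal p • Measure.dirac (1 : ℝ))
    (ℓ : ℕ) (hℓ : 0 < ℓ) :
    ∫ ω, (∑ i, a i ω) ^ ℓ ∂ℙ ≤ ∫ ω, (∑ i, b i ω) ^ ℓ ∂ℙ := by
  classical
  set F := Fintype.piFinset (fun _ : Fin ℓ => (Finset.univ : Finset (Fin k))) with hF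
  -- b i is a.e. {0,1}-valued
  have hb01 : ∀ i, ∀ᵐ ω ∂(ℙ : Measure Ω'), b i ω = 0 ∨ b i ω = 1 := by
    intro i
    have hs : MeasurableSet ({x : ℝ | x = 0 ∨ x = 1}ᶜ) :=
      (((measurableSet_singleton (0:ℝ)).union (measurableSet_singleton 1))).compl
    have hmap : Measure.map (b i) ℙ ({x : ℝ | x = 0 ∨ x = 1}ᶜ) = 0 := by
      rw [hblaw i]
      simp [Measure.dirac_apply' _ hs]
    rw [Measure.map_apply (hbmeas i) hs] at hmap
    rw [ae_iff]
    convert hmap using 2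
    rfl
  have hball : ∀ᵐ ω ∂(ℙ : Measure Ω'), ∀ i, b i ω = 0 ∨ b i ω = 1 := ae_all_iff.mpr hb01
  -- integrability of products
  have intA : ∀ S : Finset (Fin k), Integrable (fun ω => ∏ i ∈ S, a i ω) (ℙ : Measure Ω) := by
    intro S
    refine (integrable_const (1:ℝ)).mono'
      (Finset.measurable_prod S fun i _ => hameas i).aestronglyMeasurable ?_
    refine Filter.Eventually.of_forall fun ω => ?_
    have h0 : (0:ℝ) ≤ ∏ i ∈ S, a i ω :=
      Finset.prod_nonneg fun i _ => by rcases ha01 i ω with h | h <;> simp [h]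
    rw [Real.norm_eq_abs, abs_of_nonneg h0]
    exact Finset.prod_le_one (fun i _ => by rcases ha01 i ω with h | h <;> simp [h])
      (fun i _ => by rcases ha01 i ω with h | h <;> simp [h])
  have intB : ∀ S : Finset (Fin k), Integrable (fun ω => ∏ i ∈ S, b i ω) (ℙ : Measure Ω') := by
    intro S
    refine (integrable_const (1:ℝ)).mono'
      (Finset.measurable_prod S fun i _ => hbmeas i).aestronglyMeasurable ?_
    filter_upwards [hball] with ω h
    have h0 : (0:ℝ) ≤ ∏ i ∈ S, b i ω :=
      Finset.prod_nonneg fun i _ => by rcases h i with h' | h' <;> simp [h']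
    rw [Real.norm_eq_abs, abs_of_nonneg h0]
    exact Finset.prod_le_one (fun i _ => by rcases h i with h' | h' <;> simp [h'])
      (fun i _ => by rcases h i with h' | h' <;> simp [h'])
  -- E[b i] = p
  have Ebi : ∀ i, ∫ ω, b i ω ∂(ℙ : Measure Ω') = p := by
    intro i
    have hbint : Integrable (b i) (ℙ : Measure Ω') := by
      have := intB {i}; simpa using this
    have h1 : ∫ ω, b i ω ∂(ℙ : Measure Ω') = ∫ x, x ∂(Measure.map (b i) ℙ) :=
      (integral_map (hbmeas i).aemeasurable aestronglyMeasurable_id).symm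
    have hint : Integrable (fun x : ℝ => x) (Measure.map (b i) ℙ) :=
      (integrable_map_measure aestronglyMeasurable_id (hbmeas i).aemeasurable).mpr hbint
    rw [hblaw i] at h1 hint
    rw [h1, integral_add_measure ((integrable_add_measure.mp hint).1)
      ((integrable_add_measure.mp hint).2), integral_smul_measure, integral_smul_measure,
      integral_dirac, integral_dirac]
    simp [ENNReal.toReal_ofReal hp0]
  -- E[∏_{i∈S} b i] = p^|S|
  have Eprod : ∀ S : Finset (Fin k), ∫ ω, ∏ i ∈ S, b i ω ∂(ℙ : Measure Ω') = p ^ S.card := by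
    intro S
    induction S using Finset.induction with
    | empty => simp
    | @insert i S hi ih =>
      have hfun : (fun ω => ∏ j ∈ S, b j ω) = ∏ j ∈ S, b j := by
        ext ω; simp [Finset.prod_apply]
      have hindep : IndepFun (b i) (fun ω => ∏ j ∈ S, b j ω) ℙ := by
        rw [hfun]
        exact (hbindep.indepFun_finset_prod_of_notMem hbmeas hi).symm
      have hmul := hindep.integral_mul_eq_mul_integral (hbmeas i).aestronglyMeasurable
        (hfun ▸ (Finset.measurable_prod S fun j _ => hbmeas j).aestronglyMeasurable)
      simp_rw [Finset.prod_insert hi]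
      have : (fun ω => b i ω * ∏ j ∈ S, b j ω) = b i * fun ω => ∏ j ∈ S, b j ω := rfl
      rw [this, hmul, Ebi, ih, Finset.card_insert_of_notMem hi, pow_succ]
      ring
  -- expansion of both sides
  have haexp : ∀ ω, (∑ i, a i ω) ^ ℓ = ∑ g ∈ F, ∏ i ∈ Finset.image g Finset.univ, a i ω :=
    fun ω => expand01 _ (fun i => ha01 i ω)
  have hbexp : ∀ᵐ ω ∂(ℙ : Measure Ω'),
      (∑ i, b i ω) ^ ℓ = ∑ g ∈ F, ∏ i ∈ Finset.image g Finset.univ, b i ω := by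
    filter_upwards [hball] with ω h using expand01 _ h
  calc ∫ ω, (∑ i, a i ω) ^ ℓ ∂ℙ
      = ∫ ω, ∑ g ∈ F, ∏ i ∈ Finset.image g Finset.univ, a i ω ∂ℙ :=
        integral_congr_ae (Filter.Eventually.of_forall haexp)
    _ = ∑ g ∈ F, ∫ ω, ∏ i ∈ Finset.image g Finset.univ, a i ω ∂ℙ :=
        integral_finset_sum F fun g _ => intA _
    _ ≤ ∑ g ∈ F, p ^ (Finset.image g Finset.univ).card :=
        Finset.sum_le_sum fun g _ => hmom _
    _ = ∑ g ∈ F, ∫ ω, ∏ i ∈ Finset.image g Finset.univ, b i ω ∂ℙ := by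
        exact Finset.sum_congr rfl fun g _ => (Eprod _).symm
    _ = ∫ ω, ∑ g ∈ F, ∏ i ∈ Finset.image g Finset.univ, b i ω ∂ℙ :=
        (integral_finset_sum F fun g _ => intB _).symm
    _ = ∫ ω, (∑ i, b i ω) ^ ℓ ∂ℙ := (integral_congr_ae hbexp).symm
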